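/- arXiv:1204.0636 — 2 statements merged into one kernel-verified Lean document; each statement's English description precedes it below -/
import Mathlib

section
/- Let G = (V, E) be a directed graph on n vertices with latin matrix L and latin powers L^[k]. For every q ≥ 1, L^[n+q] is the zero matrix of the semiring of distinguished languages, i.e. L^[n+q]_{ij} = {λ} for all i, j. -/
attribute [local instance] Classical.propDecidable

/-- A simple word over an alphabet: a nonempty word with pairwise distinct letters. -/
def IsSimpleWord {α : Type*} (w : List α) : Prop := w ≠ [] ∧ w.Nodup

/-- A simple cyclic word: a word of the form `a₁…a_k a₁` with `a₁…a_k` a simple word. -/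
def IsCyclicWord {α : Type*} (w : List α) : Prop :=
  ∃ (a : α) (l : List α), (a :: l).Nodup ∧ w = (a :: l) ++ [a]

/-- `Σ_dw*`: the set of distinguished words over `α`, together with the empty word `λ = []`. -/
def DW (α : Type*) : Set (List α) :=
  {w | w = [] ∨ IsSimpleWord w ∨ IsCyclicWord w}

/-- The latin composition of (distinguished) words.  If either word is `λ` or a simple
cyclic word the result is `λ`; for simple words `x = a₁…a_k`, `y = b₁…b_r`:
`x ∘ℓ y = a₁…a_k b₂…b_r` if `a_k = b₁` and `{a₁,…,a_k} ∩ {b₂,…,b_r} = ∅`;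
`x ∘ℓ y = a₁…a_k b₂…b_{r-1} a₁` if `a_k = b₁`, `b_r = a₁` and
`{a₁,…,a_k} ∩ {b₂,…,b_{r-1}} = ∅`; and `x ∘ℓ y = λ` otherwise. -/
noncomputable def latin {α : Type*} (x y : List α) : List α :=
  if IsSimpleWord x ∧ IsSimpleWord y then
    if x.getLast? = y.head? ∧ ∀ a ∈ x, a ∉ y.tail then
      x ++ y.tail
    else if x.getLast? = y.head? ∧ y.getLast? = x.head? ∧ ∀ a ∈ x, a ∉ y.tail.dropLast then
      x ++ y.tail.dropLast ++ x.head?.toList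
    else []
  else []

/-- A distinguished language over `α`: a set of distinguished words containing `λ`. -/
def IsDLang {α : Type*} (L : Set (List α)) : Prop := L ⊆ DW α ∧ [] ∈ L

/-- The latin composition of languages: `L₁ ∘ℓ L₂ = {x ∘ℓ y : x ∈ L₁, y ∈ L₂}`. -/
def latinLang {α : Type*} (L₁ L₂ : Set (List α)) : Set (List α) :=
  {w | ∃ x ∈ L₁, ∃ y ∈ L₂, w = latin x y}

/-- The latin matrix of the directed graph `G = (Fin n, E)`: entry `(i,j)` is the
distinguished language `{λ, v_i v_j}` if `(v_i, v_j) ∈ E`, and `{λ}` otherwise. -/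
noncomputable def latinMat {n : ℕ} (E : Set (Fin n × Fin n)) :
    Fin n → Fin n → Set (List (Fin n)) :=
  fun i j => if (i, j) ∈ E then {[], [i, j]} else {[]}

/-- Matrix product over the semiring of distinguished languages:
`(M ∘ℓ N)_{ij} = ⋃_m M_{im} ∘ℓ N_{mj}`. -/
def latinMatMul {n : ℕ} (M N : Fin n → Fin n → Set (List (Fin n))) :
    Fin n → Fin n → Set (List (Fin n)) :=
  fun i j => ⋃ m : Fin n, latinLang (M i m) (N m j)

/-- Latin powers of a matrix: `L^[1] = L` and `L^[k] = L ∘ℓ L^[k-1]` for `k ≥ 2`. -/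
noncomputable def latinPow {n : ℕ} (M : Fin n → Fin n → Set (List (Fin n))) :
    ℕ → Fin n → Fin n → Set (List (Fin n))
  | 0 => fun _ _ => {[]}
  | 1 => M
  | k + 2 => latinMatMul M (latinPow M (k + 1))

lemma nil_mem_latinPow {n : ℕ} (E : Set (Fin n × Fin n)) :
    ∀ k (i j : Fin n), ([] : List (Fin n)) ∈ latinPow (latinMat E) k i j := by
  intro k
  induction k with
  | zero => intro i j; simp [latinPow]
  | succ k ih =>
    intro i j
    match k with
    | 0 =>
      show ([] : List (Fin n)) ∈ latinMat E i j
      unfold latinMat; split <;> simp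
    | k+1 =>
      show ([] : List (Fin n)) ∈ latinMatMul (latinMat E) (latinPow (latinMat E) (k+1)) i j
      refine Set.mem_iUnion.2 ⟨i, ⟨[], ?_, [], ih i j, ?_⟩⟩
      · unfold latinMat; split <;> simp
      · simp [latin, IsSimpleWord]

lemma latin_length_or_nil {n : ℕ} (x y w : List (Fin n)) (hw : w = latin x y)
    (hy2 : 2 ≤ y.length) :
    w = [] ∨ w.length = x.length + y.length - 1 := by
  rw [hw]; unfold latin
  split
  · next h =>
    obtain ⟨⟨hx, _⟩, ⟨hy, _⟩⟩ := h
    split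
    · right
      rw [List.length_append, List.length_tail]
      omega
    · split
      · right
        have hx1 : x.head?.toList.length = 1 := by
          cases x with
          | nil => exact absurd rfl hx
          | cons a l => simp
        have hy1 : 1 ≤ y.length := List.length_pos_iff.2 hy
        rw [List.length_append, List.length_append, hx1, List.length_dropLast,
          List.length_tail]
        omega
      · left; rfl
  · left; rfl

lemma latinPow_length {n : ℕ} (E : Set (Fin n × Fin n)) :
    ∀ k, 1 ≤ k → ∀ (i j : Fin n) w, w ∈ latinPow (latinMat E) k i j →
      w = [] ∨ w.length = k + 1 := by
  intro k
  induction k with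
  | zero => omega
  | succ k ih =>
    intro _ i j w hw
    match k with
    | 0 =>
      have : w ∈ latinMat E i j := hw
      unfold latinMat at this
      split at this
      · rcases this with h | h
        · left; exact h
        · right; simp at h; simp [h]
      · left; simpa using this
    | k+1 =>
      have hw' : w ∈ latinMatMul (latinMat E) (latinPow (latinMat E) (k+1)) i j := hw
      obtain ⟨m, x, hx, y, hy, hwxy⟩ := Set.mem_iUnion.1 hw'
      by_cases hs : IsSimpleWord x ∧ IsSimpleWord y
      · have hx2 : x.length = 2 := by
          unfold latinMat at hx
          split at hx
          · rcases hx with h' | h'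
            · exact absurd h' hs.1.1
            · simp at h'; simp [h']
          · simp at hx; exact absurd hx hs.1.1
        have hy2 : y.length = k + 2 := by
          rcases ih (by omega) m j y hy with h' | h'
          · exact absurd h' hs.2.1
          · omega
        rcases latin_length_or_nil x y w hwxy (by omega) with h | h
        · left; exact h
        · right; omega
      · left
        rw [hwxy]; unfold latin; rw [if_neg hs]

lemma nodup_of_latin {n : ℕ} (x y w : List (Fin n)) (hw : w = latin x y) :
    w = [] ∨ w.Nodup ∨ w.dropLast.Nodup := by
  rw [hw]; unfold latin
  split
  · next h =>
    obtain ⟨⟨hx, hxn⟩, ⟨hy, hyn⟩⟩ := h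
    split
    · next hc =>
      right; left
      rw [List.nodup_append]
      exact ⟨hxn, hyn.tail, fun a ha b hb hab => hc.2 a ha (by rw [hab]; exact hb)⟩
    · split
      · next hc =>
        right; right
        have hx1 : x.head?.toList.length = 1 := by
          cases x with
          | nil => exact absurd rfl hx
          | cons a l => simp
        have : (x ++ y.tail.dropLast ++ x.head?.toList).dropLast = x ++ y.tail.dropLast := by
          rw [List.dropLast_append_of_ne_nil, List.append_right_eq_self]
          · cases x with
            | nil => exact absurd rfl hx
            | cons a l => simp
          · cases x with
            | nil => exact absurd rfl hx
            | cons a l => simp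
        rw [this, List.nodup_append]
        exact ⟨hxn, (List.dropLast_sublist y.tail).nodup hyn.tail,
          fun a ha b hb hab => hc.2.2 a ha (by rw [hab]; exact hb)⟩
      · left; rfl
  · left; rfl

/-- for every `q ≥ 1`, `L^[n+q]` is the zero matrix of the semiring of
distinguished languages: `L^[n+q]_{ij} = {λ}` for all `i, j`. -/
theorem latinPow_eventually_zero (n : ℕ) (hn : 1 ≤ n) (E : Set (Fin n × Fin n))
    (q : ℕ) (hq : 1 ≤ q) (i j : Fin n) :
    latinPow (latinMat E) (n + q) i j = {([] : List (Fin n))} := by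
  apply Set.eq_singleton_iff_unique_mem.2
  refine ⟨nil_mem_latinPow E _ i j, ?_⟩
  intro w hw
  by_contra hne
  obtain ⟨k, hk⟩ : ∃ k, n + q = k + 2 := ⟨n + q - 2, by omega⟩
  rw [hk] at hw
  have hw' : w ∈ latinMatMul (latinMat E) (latinPow (latinMat E) (k+1)) i j := hw
  obtain ⟨m, x, hx, y, hy, hwxy⟩ := Set.mem_iUnion.1 hw'
  have hlen : w.length = k + 3 := by
    rcases latinPow_length E (k+2) (by omega) i j w hw with h | h
    · exact absurd h hne
    · omega
  have hcard : ∀ l : List (Fin n), l.Nodup → l.length ≤ n := by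
    intro l hl
    simpa using hl.length_le_card
  rcases nodup_of_latin x y w hwxy with h | h | h
  · exact hne h
  · have := hcard w h; omega
  · have := hcard _ h
    rw [List.length_dropLast, hlen] at this
    omega
end

section
/- Let G = (V, E) be a directed graph on n vertices with latin matrix L and latin powers L^[k]. For each i, the words of L^[n]_{ii} other than λ are exactly the vertex sequences of the Hamiltonian circuits of G starting at v_i (elementary circuits of length n, which visit every vertex of G exactly once before returning to v_i); in particular, G has a Hamiltonian circuit starting at v_i if and only if L^[n]_{ii} ≠ {λ}. -/
attribute [local instance] Classical.propDecidable

lemma getLast?_cons_ne {α : Type*} (a : α) {l : List α} (h : l ≠ []) :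
    (a :: l).getLast? = l.getLast? := by
  cases l with
  | nil => exact absurd rfl h
  | cons b t => simp

lemma mem_latinMat_iff {n : ℕ} (E : Set (Fin n × Fin n)) (i j : Fin n) (w : List (Fin n)) :
    w ∈ latinMat E i j ↔ w = [] ∨ (w = [i, j] ∧ (i, j) ∈ E) := by
  unfold latinMat
  split <;> simp_all [Set.mem_insert_iff]

lemma key {n : ℕ} (E : Set (Fin n × Fin n)) :
    ∀ k, 1 ≤ k → ∀ (i j : Fin n) (w : List (Fin n)), w ≠ [] →
      (w ∈ latinPow (latinMat E) k i j ↔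
        (w.length = k + 1 ∧ w.head? = some i ∧ w.getLast? = some j ∧
          w.Chain' (fun a b => (a, b) ∈ E) ∧
          ((i ≠ j ∧ w.Nodup) ∨ (i = j ∧ w.dropLast.Nodup)))) := by
  intro k
  induction k with
  | zero => omega
  | succ k ih =>
    intro _ i j w hw
    match k, ih with
    | 0, _ =>
      rw [show latinPow (latinMat E) 1 = latinMat E from rfl, mem_latinMat_iff]
      constructor
      · rintro (rfl | ⟨rfl, hE⟩)
        · exact absurd rfl hw
        · refine ⟨rfl, rfl, rfl, List.isChain_pair.mpr hE, ?_⟩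
          by_cases hij : i = j
          · exact Or.inr ⟨hij, by simp⟩
          · exact Or.inl ⟨hij, by simp [hij]⟩
      · rintro ⟨hlen, hhd, hlast, hch, _⟩
        match w, hlen with
        | [a, b], _ =>
          simp only [List.head?_cons, Option.some.injEq] at hhd
          simp only [List.getLast?_cons_cons, List.getLast?_singleton, Option.some.injEq] at hlast
          subst hhd; subst hlast
          exact Or.inr ⟨rfl, (List.isChain_cons_cons.mp hch).1⟩
    | k + 1, ih =>
      have ih' := ih (by omega)
      rw [show latinPow (latinMat E) (k + 2)
            = latinMatMul (latinMat E) (latinPow (latinMat E) (k+1)) from rfl]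
      simp only [latinMatMul, latinLang, Set.mem_iUnion, Set.mem_setOf_eq]
      constructor
      · rintro ⟨m, x, hx, y, hy, hweq⟩
        by_cases hs : IsSimpleWord x ∧ IsSimpleWord y
        swap
        · rw [latin, if_neg hs] at hweq; exact absurd hweq hw
        obtain ⟨hsx, hsy⟩ := hs
        rcases (mem_latinMat_iff E i m x).mp hx with rfl | ⟨rfl, hEim⟩
        · exact absurd rfl hsx.1
        have him : i ≠ m := by
          have := hsx.2; simp only [List.nodup_cons, List.mem_singleton] at this
          exact this.1
        obtain ⟨hylen, hyhd, hylast, hych, _⟩ := (ih' m j y hsy.1).mp hy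
        have hynd : y.Nodup := hsy.2
        match y, hyhd with
        | m2 :: t, hyhd =>
        simp only [List.head?_cons, Option.some.injEq] at hyhd
        have hme : m = m2 := (by simpa using hyhd : m2 = m).symm
        subst hme
        have hmt : m ∉ t := (List.nodup_cons.mp hynd).1
        have htnd : t.Nodup := (List.nodup_cons.mp hynd).2
        have htne : t ≠ [] := by
          intro h; subst h
          simp only [List.length_cons, List.length_nil] at hylen; omega
        have hjt : j ∈ t := by
          rw [getLast?_cons_ne m htne] at hylast
          exact List.mem_of_getLast? hylast
        have hxl : ([i, m] : List (Fin n)).getLast? = (m :: t).head? := by simp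
        rw [latin, if_pos ⟨hsx, hsy⟩] at hweq
        by_cases h1 : ∀ a ∈ ([i, m] : List (Fin n)), a ∉ (m :: t).tail
        · rw [if_pos ⟨hxl, h1⟩] at hweq
          -- w = i :: m :: t
          have hwt : w = i :: m :: t := by simpa using hweq
          subst hwt
          have hit : i ∉ t := by simpa using h1 i (by simp)
          have hij : i ≠ j := fun h => hit (h ▸ hjt)
          refine ⟨by simp only [List.length_cons] at hylen ⊢; omega, rfl, ?_, ?_, Or.inl ⟨hij, ?_⟩⟩
          · rw [getLast?_cons_ne i (by simp), getLast?_cons_ne m htne,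
              ← getLast?_cons_ne m htne]
            exact hylast
          · exact List.isChain_cons_cons.mpr ⟨hEim, hych⟩
          · exact List.nodup_cons.mpr ⟨by simp [him, hit], hynd⟩
        · rw [if_neg (fun hc => h1 hc.2)] at hweq
          by_cases h2 : ([i, m] : List (Fin n)).getLast? = (m :: t).head? ∧
              (m :: t).getLast? = ([i, m] : List (Fin n)).head? ∧
              ∀ a ∈ ([i, m] : List (Fin n)), a ∉ (m :: t).tail.dropLast
          swap
          · rw [if_neg h2] at hweq; exact absurd hweq hw
          rw [if_pos h2] at hweq
          have hij : i = j := by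
            have h21 := h2.2.1
            rw [hylast] at h21
            simpa using h21.symm
          subst j
          -- t = t.dropLast ++ [i]
          have htlast : t.getLast htne = i := by
            rw [getLast?_cons_ne m htne, List.getLast?_eq_getLast htne] at hylast
            simpa using hylast
          have htdec : t.dropLast ++ [i] = t := htlast ▸ List.dropLast_append_getLast htne
          have hidl : i ∉ t.dropLast := by simpa using h2.2.2 i (by simp)
          have hmdl : m ∉ t.dropLast := by simpa using h2.2.2 m (by simp)
          have hwt : w = i :: m :: (t.dropLast ++ [i]) := by
            simp only [hweq]; simp
          rw [htdec] at hwt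
          subst hwt
          refine ⟨by simp only [List.length_cons] at hylen ⊢; omega, rfl, ?_, ?_, Or.inr ⟨rfl, ?_⟩⟩
          · rw [getLast?_cons_ne i (by simp), getLast?_cons_ne m htne,
              ← getLast?_cons_ne m htne]
            exact hylast
          · exact List.isChain_cons_cons.mpr ⟨hEim, hych⟩
          · rw [← htdec]
            have hdle : (i :: m :: (t.dropLast ++ [i])).dropLast = i :: m :: t.dropLast := by
              rw [show i :: m :: (t.dropLast ++ [i]) = (i :: m :: t.dropLast) ++ [i] by simp,
                List.dropLast_concat]
            rw [hdle]
            refine List.nodup_cons.mpr ⟨?_, List.nodup_cons.mpr ⟨hmdl, htnd.sublist (List.dropLast_sublist t)⟩⟩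
            simp only [List.mem_cons, not_or]
            exact ⟨fun h => him h, hidl⟩
      · rintro ⟨hlen, hhd, hlast, hch, hdis⟩
        match w, hlen with
        | i' :: m :: t, hlen =>
        simp only [List.head?_cons, Option.some.injEq] at hhd
        subst i'
        have htne : t ≠ [] := by
          intro h; subst h
          simp only [List.length_cons, List.length_nil] at hlen; omega
        have hylen : (m :: t).length = k + 1 + 1 := by simp at hlen ⊢; omega
        have hylast : (m :: t).getLast? = some j := by
          rw [← getLast?_cons_ne i (by simp : (m :: t) ≠ [])]; exact hlast
        have hych : List.Chain' (fun a b => (a, b) ∈ E) (m :: t) := (List.isChain_cons_cons.mp hch).2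
        have hEim : (i, m) ∈ E := (List.isChain_cons_cons.mp hch).1
        have hjt : j ∈ t := by
          rw [getLast?_cons_ne m htne] at hylast
          exact List.mem_of_getLast? hylast
        refine ⟨m, [i, m], (mem_latinMat_iff E i m _).mpr (Or.inr ⟨rfl, hEim⟩), m :: t, ?_, ?_⟩
        all_goals rcases hdis with ⟨hij, hnd⟩ | ⟨hij, hnd⟩
        -- membership of y, case i ≠ j (w nodup)
        · have hit : i ∉ m :: t := (List.nodup_cons.mp hnd).1
          have hynd : (m :: t).Nodup := (List.nodup_cons.mp hnd).2
          have hmj : m ≠ j := fun h => (List.nodup_cons.mp hynd).1 (h ▸ hjt)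
          exact (ih' m j _ (by simp)).mpr ⟨hylen, rfl, hylast, hych, Or.inl ⟨hmj, hynd⟩⟩
        -- membership of y, case i = j (w.dropLast nodup)
        · subst j
          have htlast : t.getLast htne = i := by
            rw [getLast?_cons_ne m htne, List.getLast?_eq_getLast htne] at hylast
            simpa using hylast
          have htdec : t.dropLast ++ [i] = t := htlast ▸ List.dropLast_append_getLast htne
          have hdl : (i :: m :: t).dropLast = i :: m :: t.dropLast := by
            conv_lhs => rw [← htdec]
            rw [show i :: m :: (t.dropLast ++ [i]) = (i :: m :: t.dropLast) ++ [i] by simp,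
              List.dropLast_concat]
          rw [hdl] at hnd
          have him : i ≠ m := by
            have := (List.nodup_cons.mp hnd).1; simp only [List.mem_cons, not_or] at this
            exact this.1
          have hidl : i ∉ t.dropLast := by
            have := (List.nodup_cons.mp hnd).1; simp only [List.mem_cons, not_or] at this
            exact this.2
          have hmdl : m ∉ t.dropLast := (List.nodup_cons.mp (List.nodup_cons.mp hnd).2).1
          have hdlnd : t.dropLast.Nodup := (List.nodup_cons.mp (List.nodup_cons.mp hnd).2).2
          have hynd : (m :: t).Nodup := by
            rw [← htdec]
            refine List.nodup_cons.mpr ⟨?_, ?_⟩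
            · intro h
              rcases List.mem_append.mp h with h | h
              · exact hmdl h
              · exact him (List.mem_singleton.mp h).symm
            · refine List.Nodup.append hdlnd (by simp) ?_
              intro a ha hai
              rw [List.mem_singleton.mp hai] at ha
              exact hidl ha
          exact (ih' m i _ (by simp)).mpr ⟨hylen, rfl, hylast, hych, Or.inl ⟨fun h => him h.symm, hynd⟩⟩
        -- w = latin x y, case i ≠ j
        · have hit : i ∉ m :: t := (List.nodup_cons.mp hnd).1
          have hynd : (m :: t).Nodup := (List.nodup_cons.mp hnd).2
          have hmt : m ∉ t := (List.nodup_cons.mp hynd).1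
          have him' : i ≠ m := fun h => hit (h ▸ (List.mem_cons_self (a := m) (l := t)))
          have hsx : IsSimpleWord [i, m] := ⟨by simp, by simp [him']⟩
          have hsy : IsSimpleWord (m :: t) := ⟨by simp, hynd⟩
          have hcond : ([i, m] : List (Fin n)).getLast? = (m :: t).head? ∧
              ∀ a ∈ ([i, m] : List (Fin n)), a ∉ (m :: t).tail := by
            refine ⟨by simp, ?_⟩
            intro a ha
            simp only [List.mem_cons, List.mem_singleton, List.not_mem_nil, or_false] at ha
            rcases ha with rfl | rfl
            · exact fun h => hit (List.mem_cons_of_mem m h)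
            · exact hmt
          rw [latin, if_pos ⟨hsx, hsy⟩, if_pos hcond]
          simp
        -- w = latin x y, case i = j
        · subst j
          have htlast : t.getLast htne = i := by
            rw [getLast?_cons_ne m htne, List.getLast?_eq_getLast htne] at hylast
            simpa using hylast
          have htdec : t.dropLast ++ [i] = t := htlast ▸ List.dropLast_append_getLast htne
          have hdl : (i :: m :: t).dropLast = i :: m :: t.dropLast := by
            conv_lhs => rw [← htdec]
            rw [show i :: m :: (t.dropLast ++ [i]) = (i :: m :: t.dropLast) ++ [i] by simp,
              List.dropLast_concat]
          rw [hdl] at hnd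
          have him : i ≠ m := by
            have := (List.nodup_cons.mp hnd).1; simp only [List.mem_cons, not_or] at this
            exact this.1
          have hidl : i ∉ t.dropLast := by
            have := (List.nodup_cons.mp hnd).1; simp only [List.mem_cons, not_or] at this
            exact this.2
          have hmdl : m ∉ t.dropLast := (List.nodup_cons.mp (List.nodup_cons.mp hnd).2).1
          have hdlnd : t.dropLast.Nodup := (List.nodup_cons.mp (List.nodup_cons.mp hnd).2).2
          have hynd : (m :: t).Nodup := by
            rw [← htdec]
            refine List.nodup_cons.mpr ⟨?_, ?_⟩
            · intro h
              rcases List.mem_append.mp h with h | h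
              · exact hmdl h
              · exact him (List.mem_singleton.mp h).symm
            · refine List.Nodup.append hdlnd (by simp) ?_
              intro a ha hai
              rw [List.mem_singleton.mp hai] at ha
              exact hidl ha
          have hsx : IsSimpleWord [i, m] := ⟨by simp, by simp [him]⟩
          have hsy : IsSimpleWord (m :: t) := ⟨by simp, hynd⟩
          have hiit : i ∈ t := by rw [← htdec]; simp
          have hcond2 : ([i, m] : List (Fin n)).getLast? = (m :: t).head? ∧
              (m :: t).getLast? = ([i, m] : List (Fin n)).head? ∧
              ∀ a ∈ ([i, m] : List (Fin n)), a ∉ (m :: t).tail.dropLast := by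
            refine ⟨by simp, by simpa using hylast, ?_⟩
            intro a ha
            simp only [List.mem_cons, List.mem_singleton, List.not_mem_nil, or_false] at ha
            simp only [List.tail_cons]
            rcases ha with rfl | rfl
            · exact hidl
            · exact hmdl
          rw [latin, if_pos ⟨hsx, hsy⟩, if_neg (fun hc => (hc.2 i (by simp)) hiit),
            if_pos hcond2]
          simp only [List.tail_cons, List.head?_cons, Option.toList_some]
          conv_rhs => rw [show ([i, m] ++ t.dropLast) ++ [i] = i :: m :: (t.dropLast ++ [i]) by simp, htdec]
lemma empty_mem_latinPow {n : ℕ} (E : Set (Fin n × Fin n)) :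
    ∀ k (i j : Fin n), [] ∈ latinPow (latinMat E) k i j := by
  intro k
  induction k with
  | zero => intro i j; rfl
  | succ k ih =>
    match k, ih with
    | 0, _ =>
      intro i j
      rw [show latinPow (latinMat E) 1 = latinMat E from rfl, mem_latinMat_iff]
      exact Or.inl rfl
    | k + 1, ih =>
      intro i j
      rw [show latinPow (latinMat E) (k + 2)
            = latinMatMul (latinMat E) (latinPow (latinMat E) (k+1)) from rfl]
      simp only [latinMatMul, latinLang, Set.mem_iUnion, Set.mem_setOf_eq]
      refine ⟨i, [], (mem_latinMat_iff E i i []).mpr (Or.inl rfl), [], ih i j, ?_⟩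
      rw [latin, if_neg]
      rintro ⟨⟨h, -⟩, -⟩
      exact h rfl

/-- for each `i`, the words of `L^[n]_{ii}` other than `λ` are exactly the
vertex sequences of the Hamiltonian circuits of `G` starting at `v_i`: sequences
`(w₀, …, w_n)` with `w₀ = w_n = v_i`, whose first `n` vertices `w₀, …, w_{n-1}` list
each vertex of `G` exactly once, and which follow arcs of `G`; in particular `G` has a
Hamiltonian circuit starting at `v_i` iff `L^[n]_{ii} ≠ {λ}`. -/
theorem latinPow_hamiltonian_circuits (n : ℕ) (hn : 1 ≤ n) (E : Set (Fin n × Fin n))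
    (i : Fin n) :
    (∀ w : List (Fin n),
      (w ∈ latinPow (latinMat E) n i i ∧ w ≠ []) ↔
        (w.length = n + 1 ∧ w.head? = some i ∧ w.getLast? = some i ∧
          (∀ v : Fin n, w.dropLast.count v = 1) ∧
          w.Chain' (fun a b => (a, b) ∈ E))) ∧
    ((∃ w : List (Fin n),
        w.length = n + 1 ∧ w.head? = some i ∧ w.getLast? = some i ∧
          (∀ v : Fin n, w.dropLast.count v = 1) ∧
          w.Chain' (fun a b => (a, b) ∈ E)) ↔
      latinPow (latinMat E) n i i ≠ {([] : List (Fin n))}) := by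
  have main : ∀ w : List (Fin n),
      (w ∈ latinPow (latinMat E) n i i ∧ w ≠ []) ↔
        (w.length = n + 1 ∧ w.head? = some i ∧ w.getLast? = some i ∧
          (∀ v : Fin n, w.dropLast.count v = 1) ∧
          w.Chain' (fun a b => (a, b) ∈ E)) := by
    intro w
    constructor
    · rintro ⟨hmem, hwne⟩
      obtain ⟨hlen, hhd, hlast, hch, hdis⟩ := (key E n hn i i w hwne).mp hmem
      refine ⟨hlen, hhd, hlast, ?_, hch⟩
      rcases hdis with ⟨hne, -⟩ | ⟨-, hnd⟩
      · exact absurd rfl hne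
      · -- dropLast has length n and is nodup, hence contains everything once
        have hdlen : w.dropLast.length = n := by
          rw [List.length_dropLast, hlen]; omega
        have hcard : w.dropLast.toFinset = Finset.univ := by
          apply Finset.eq_univ_of_card
          rw [List.toFinset_card_of_nodup hnd, hdlen, Fintype.card_fin]
        intro v
        refine List.count_eq_one_of_mem hnd ?_
        rw [← List.mem_toFinset, hcard]
        exact Finset.mem_univ v
    · rintro ⟨hlen, hhd, hlast, hcount, hch⟩
      have hwne : w ≠ [] := by
        intro h; subst h; simp at hlen
      have hnd : w.dropLast.Nodup := by
        rw [List.nodup_iff_count_le_one]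
        intro a; rw [hcount a]
      exact ⟨(key E n hn i i w hwne).mpr ⟨hlen, hhd, hlast, hch, Or.inr ⟨rfl, hnd⟩⟩, hwne⟩
  refine ⟨main, ?_⟩
  constructor
  · rintro ⟨w, hw⟩ hset
    have := ((main w).mpr hw).1
    rw [hset] at this
    have hwne : w ≠ [] := ((main w).mpr hw).2
    exact hwne (by simpa using this)
  · intro hne
    have hempty := empty_mem_latinPow E n i i
    by_contra hno
    push_neg at hno
    apply hne
    ext w
    simp only [Set.mem_singleton_iff]
    constructor
    · intro hw
      by_contra hwne
      exact absurd ((main w).mp ⟨hw, hwne⟩) (by simpa using hno w)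
    · rintro rfl; exact hempty
end
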